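/- Let f be a univariate real polynomial and a, b ∈ ℝ with a ≠ 0. Then f is a sum of squares of polynomials if and only if (ax+b)²·f is a sum of squares of polynomials. -/

import Mathlib

open Polynomial Finset

/-- For a univariate real polynomial `f` and reals `a ≠ 0`, `b`, the polynomial
`f` is a sum of squares of polynomials if and only if `(ax + b)² · f` is. -/
theorem stmt_8 (f : Polynomial ℝ) (a b : ℝ) (ha : a ≠ 0) :
    (∃ (m : ℕ) (q : Fin m → Polynomial ℝ), f = ∑ i, q i ^ 2) ↔
    (∃ (m : ℕ) (q : Fin m → Polynomial ℝ),
        (C a * X + C b) ^ 2 * f = ∑ i, q i ^ 2) := by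
  constructor
  · rintro ⟨m, q, rfl⟩
    refine ⟨m, fun i => (C a * X + C b) * q i, ?_⟩
    rw [Finset.mul_sum]
    exact Finset.sum_congr rfl fun i _ => by ring
  · rintro ⟨m, q, hq⟩
    set r : ℝ := -b / a with hr
    have hroot : a * r + b = 0 := by rw [hr, mul_div_cancel₀ (-b) ha]; ring
    have hq0 : ∀ i, (q i).eval r = 0 := by
      intro i
      have h1 : (∑ j, (q j).eval r ^ 2) = 0 := by
        have := congrArg (Polynomial.eval r) hq
        simpa [eval_finset_sum, hroot] using this.symm
      have := Finset.sum_eq_zero_iff_of_nonneg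
        (fun j _ => sq_nonneg ((q j).eval r)) |>.mp h1 i (Finset.mem_univ i)
      exact pow_eq_zero_iff (by norm_num) |>.mp this
    choose p hp using fun i =>
      (dvd_iff_isRoot.mpr (hq0 i) : (X - C r) ∣ q i)
    refine ⟨m, fun i => C a⁻¹ * p i, ?_⟩
    have hfac : C a * X + C b = C a * (X - C r) := by
      rw [mul_sub, ← C_mul, sub_eq_add_neg, ← C_neg]
      congr 2
      linear_combination hroot
    have key : (X - C r) ^ 2 * (C (a ^ 2) * f) = (X - C r) ^ 2 * (∑ i, p i ^ 2) := by
      have : (C a * (X - C r)) ^ 2 * f = ∑ i, ((X - C r) * p i) ^ 2 := by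
        rw [← hfac, hq]
        exact Finset.sum_congr rfl fun i _ => by rw [← hp i]
      calc (X - C r) ^ 2 * (C (a ^ 2) * f)
          = (C a * (X - C r)) ^ 2 * f := by rw [C_pow]; ring
        _ = ∑ i, ((X - C r) * p i) ^ 2 := this
        _ = (X - C r) ^ 2 * (∑ i, p i ^ 2) := by
            rw [Finset.mul_sum]; exact Finset.sum_congr rfl fun i _ => by ring
    have hxr : (X - C r : Polynomial ℝ) ^ 2 ≠ 0 := pow_ne_zero _ (X_sub_C_ne_zero r)
    have key2 : C (a ^ 2) * f = ∑ i, p i ^ 2 := mul_left_cancel₀ hxr key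
    have : f = C (a⁻¹ ^ 2) * ∑ i, p i ^ 2 := by
      rw [← key2, ← mul_assoc, ← C_mul]
      simp [ha]
    rw [this, Finset.mul_sum]
    exact Finset.sum_congr rfl fun i _ => by rw [C_pow]; ring
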